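/- arXiv:2407.12590 — 17 statements merged into one kernel-verified Lean document; each statement's English description precedes it below -/
import Mathlib

section
/- An ideal I of R with I ∩ S = ∅ is an S-J-ideal if and only if there exists s ∈ S such that for all ideals A and B of R with A·B ⊆ I, either s·A ⊆ J(R) or s·B ⊆ I. -/
open Ideal

/-- `S` is a multiplicatively closed subset of `R`: `1 ∈ S` and `S` is closed under
multiplication. -/
def MulClosed {R : Type*} [CommRing R] (S : Set R) : Prop :=
  (1 : R) ∈ S ∧ ∀ a ∈ S, ∀ b ∈ S, a * b ∈ S

/-- `I` is an `S`-`𝒥`-ideal associated with `s ∈ S`: for all `a b : R`, `a * b ∈ I`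
implies `s * a ∈ 𝒥(R)` or `s * b ∈ I`, where `𝒥(R)` is the Jacobson radical of `R`. -/
def SJIdealWith {R : Type*} [CommRing R] (S : Set R) (I : Ideal R) (s : R) : Prop :=
  s ∈ S ∧ ∀ a b : R, a * b ∈ I → s * a ∈ (⊥ : Ideal R).jacobson ∨ s * b ∈ I

/-- `I` is an `S`-`𝒥`-ideal: `I` is disjoint from `S` and some `s ∈ S` works. -/
def IsSJIdeal {R : Type*} [CommRing R] (S : Set R) (I : Ideal R) : Prop :=
  S ∩ (I : Set R) = ∅ ∧ ∃ s, SJIdealWith S I s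

theorem stmt1 {R : Type*} [CommRing R] (S : Set R) (hS : MulClosed S)
    (I : Ideal R) (hdisj : S ∩ (I : Set R) = ∅) :
    IsSJIdeal S I ↔
      ∃ s ∈ S, ∀ A B : Ideal R, A * B ≤ I →
        (∀ a ∈ A, s * a ∈ (⊥ : Ideal R).jacobson) ∨ (∀ b ∈ B, s * b ∈ I) := by
  constructor
  · rintro ⟨-, s, hsS, hs⟩
    refine ⟨s, hsS, fun A B hAB => ?_⟩
    by_contra h
    push_neg at h
    obtain ⟨⟨a, haA, haJ⟩, b, hbB, hbI⟩ := h
    rcases hs a b (hAB (Ideal.mul_mem_mul haA hbB)) with h | h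
    · exact haJ h
    · exact hbI h
  · rintro ⟨s, hsS, hs⟩
    refine ⟨hdisj, s, hsS, fun a b hab => ?_⟩
    have hle : Ideal.span {a} * Ideal.span {b} ≤ I := by
      rw [Ideal.span_singleton_mul_span_singleton]
      exact (Ideal.span_singleton_le_iff_mem I).mpr hab
    rcases hs (Ideal.span {a}) (Ideal.span {b}) hle with h | h
    · exact Or.inl (h a (Ideal.subset_span rfl))
    · exact Or.inr (h b (Ideal.subset_span rfl))
end

section
/- Let I be an ideal of R with I ∩ S = ∅. If (I : s) is a J-ideal of R for some s ∈ S, then I is an S-J-ideal of R. -/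
open Ideal

/-- A proper ideal `I` of `R` is a `𝒥`-ideal if for all `a b : R` with `a * b ∈ I`
and `a ∉ 𝒥(R)`, one has `b ∈ I`. -/
def IsJIdeal {R : Type*} [CommRing R] (I : Ideal R) : Prop :=
  I ≠ ⊤ ∧ ∀ a b : R, a * b ∈ I → a ∉ (⊥ : Ideal R).jacobson → b ∈ I

theorem stmt2 {R : Type*} [CommRing R] (S : Set R) (hS : MulClosed S)
    (I : Ideal R) (hdisj : S ∩ (I : Set R) = ∅)
    (s : R) (hs : s ∈ S) (h : IsJIdeal (I.colon (Ideal.span {s}))) :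
    IsSJIdeal S I := by
  refine ⟨hdisj, s, hs, fun a b hab => ?_⟩
  by_cases ha : a ∈ (⊥ : Ideal R).jacobson
  · exact Or.inl (Ideal.mul_mem_left _ s ha)
  · right
    have hb : b ∈ I.colon (Ideal.span {s}) := h.2 a b
      ((Ideal.mem_colon_span_singleton).2 (by rw [mul_comm]; exact I.mul_mem_left s hab)) ha
    have := (Ideal.mem_colon_span_singleton).1 hb
    rwa [mul_comm]
end

section
/- Suppose J(R) is a J-ideal of R and J(R) ∩ S = ∅. If I is an S-J-ideal of R, then there exists s ∈ S such that (I : s) is a J-ideal of R. -/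
open Ideal

theorem stmt3 {R : Type*} [CommRing R] (S : Set R) (hS : MulClosed S)
    (hJ : IsJIdeal ((⊥ : Ideal R).jacobson))
    (hJS : (((⊥ : Ideal R).jacobson : Set R) ∩ S) = ∅)
    (I : Ideal R) (hI : IsSJIdeal S I) :
    ∃ s ∈ S, IsJIdeal (I.colon (Ideal.span {s})) := by
  obtain ⟨hdisj, s, hsS, hsj⟩ := hI
  refine ⟨s, hsS, ?_, ?_⟩
  · intro h
    have : (1 : R) ∈ I.colon (Ideal.span {s}) := h ▸ Submodule.mem_top
    rw [Ideal.mem_colon_span_singleton, one_mul] at this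
    exact Set.eq_empty_iff_forall_notMem.mp hdisj s ⟨hsS, this⟩
  · intro a b hab haJ
    rw [Ideal.mem_colon_span_singleton] at hab ⊢
    have h1 : (s * a) * b ∈ I := by rwa [mul_comm (a * b) s, ← mul_assoc] at hab
    rcases hsj (s * a) b h1 with h2 | h2
    · exfalso
      have hs2 : s * s ∉ (⊥ : Ideal R).jacobson := fun hmem =>
        Set.eq_empty_iff_forall_notMem.mp hJS (s * s) ⟨hmem, hS.2 s hsS s hsS⟩
      have : (s * s) * a ∈ (⊥ : Ideal R).jacobson := by
        rw [mul_assoc]; exact h2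
      exact haJ (hJ.2 (s * s) a this hs2)
    · rwa [mul_comm]
end

section
/- An ideal I of R with I ∩ S = ∅ is an S-J-ideal if and only if there exists s ∈ S such that for every a ∈ R with a ∉ (I : s), one has (I : a) ⊆ (J(R) : s). -/
open Ideal

theorem stmt4 {R : Type*} [CommRing R] (S : Set R) (hS : MulClosed S)
    (I : Ideal R) (hdisj : S ∩ (I : Set R) = ∅) :
    IsSJIdeal S I ↔
      ∃ s ∈ S, ∀ a : R, a ∉ I.colon (Ideal.span {s}) →
        I.colon (Ideal.span {a}) ≤ ((⊥ : Ideal R).jacobson).colon (Ideal.span {s}) := by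
  constructor
  · rintro ⟨-, s, hsS, hs⟩
    refine ⟨s, hsS, fun a ha b hb => ?_⟩
    rw [Ideal.mem_colon_span_singleton] at ha hb ⊢
    rcases hs b a hb with h | h
    · rwa [mul_comm]
    · rw [mul_comm] at ha; exact absurd h ha
  · rintro ⟨s, hsS, hs⟩
    refine ⟨hdisj, s, hsS, fun a b hab => ?_⟩
    by_cases h : s * b ∈ I
    · exact Or.inr h
    · refine Or.inl ?_
      have := hs b (by rw [Ideal.mem_colon_span_singleton]; rwa [mul_comm]) (x := a)
        (by rwa [Ideal.mem_colon_span_singleton])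
      rw [Ideal.mem_colon_span_singleton] at this
      rwa [mul_comm]
end

section
/- An ideal I of R with I ∩ S = ∅ is an S-J-ideal if and only if there exists s ∈ S such that for every b ∈ R with b ∉ (J(R) : s), one has (I : b) ⊆ (I : s). -/
open Ideal

theorem stmt5 {R : Type*} [CommRing R] (S : Set R) (hS : MulClosed S)
    (I : Ideal R) (hdisj : S ∩ (I : Set R) = ∅) :
    IsSJIdeal S I ↔
      ∃ s ∈ S, ∀ b : R, b ∉ ((⊥ : Ideal R).jacobson).colon (Ideal.span {s}) →
        I.colon (Ideal.span {b}) ≤ I.colon (Ideal.span {s}) := by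
  constructor
  · rintro ⟨-, s, hsS, hs⟩
    refine ⟨s, hsS, fun b hb x hx => ?_⟩
    rw [Ideal.mem_colon_span_singleton] at hx ⊢
    rw [Ideal.mem_colon_span_singleton] at hb
    rcases hs b x (by rwa [mul_comm] at hx) with h | h
    · exact absurd (by rwa [mul_comm] at h) hb
    · rwa [mul_comm]
  · rintro ⟨s, hsS, hs⟩
    refine ⟨hdisj, s, hsS, fun a b hab => ?_⟩
    by_cases h : s * a ∈ (⊥ : Ideal R).jacobson
    · exact Or.inl h
    · right
      have ha : a ∉ ((⊥ : Ideal R).jacobson).colon (Ideal.span {s}) := by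
        rw [Ideal.mem_colon_span_singleton, mul_comm]; exact h
      have := hs a ha (Ideal.mem_colon_span_singleton.mpr (by rwa [mul_comm] at hab) : b ∈ _)
      rw [Ideal.mem_colon_span_singleton] at this
      rwa [mul_comm]
end

section
/- Let I be an ideal of R that equals an intersection of a nonempty family of maximal ideals of R. If I is finitely generated and I is an S-J-ideal of R, then J(R) is S-finite. -/
open Ideal

/-- An ideal `K` of `R` is `S`-finite if there exist `s ∈ S` and a finitely generated
ideal `F` with `s • K ⊆ F ⊆ K`. -/
def SFinite {R : Type*} [CommRing R] (S : Set R) (K : Ideal R) : Prop :=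
  ∃ s ∈ S, ∃ F : Ideal R, F.FG ∧ (∀ k ∈ K, s * k ∈ F) ∧ F ≤ K

theorem stmt6 {R : Type*} [CommRing R] (S : Set R) (hS : MulClosed S)
    (I : Ideal R)
    (hmax : ∃ 𝔐 : Set (Ideal R), 𝔐.Nonempty ∧ (∀ M ∈ 𝔐, M.IsMaximal) ∧ I = sInf 𝔐)
    (hfg : I.FG) (hI : IsSJIdeal S I) :
    SFinite S ((⊥ : Ideal R).jacobson) := by
  classical
  obtain ⟨𝔐, h𝔐ne, h𝔐max, hIeq⟩ := hmax
  obtain ⟨hdisj, s, hsS, hs⟩ := hI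
  obtain ⟨T, hT⟩ := hfg
  -- J(R) ≤ I
  have hJI : (⊥ : Ideal R).jacobson ≤ I := by
    rw [hIeq]
    refine le_sInf fun M hM => ?_
    exact sInf_le ⟨bot_le, h𝔐max M hM⟩
  -- s ∉ I
  have hsnI : s ∉ I := by
    intro h
    have : s ∈ S ∩ (I : Set R) := ⟨hsS, h⟩
    rw [hdisj] at this
    exact this
  -- s • I ⊆ J(R)
  have hsI : ∀ a ∈ I, s * a ∈ (⊥ : Ideal R).jacobson := by
    intro a ha
    rcases hs a 1 (by simpa using ha) with h | h
    · exact h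
    · exact absurd (by simpa using h) hsnI
  refine ⟨s, hsS, Ideal.span ((s * ·) '' T), ?_, ?_, ?_⟩
  · exact ⟨(T.image (s * ·)), by simp⟩
  · intro k hk
    have hkI : k ∈ Ideal.span (T : Set R) := by rw [hT]; exact hJI hk
    refine Submodule.span_induction ?_ ?_ ?_ ?_ hkI
    · intro x hx
      exact Ideal.subset_span ⟨x, hx, rfl⟩
    · simp
    · intro x y _ _ hx hy
      rw [mul_add]; exact Ideal.add_mem _ hx hy
    · intro r x _ hx
      have : s * (r • x) = r • (s * x) := by simp only [smul_eq_mul]; ring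
      rw [this]; exact Submodule.smul_mem _ r hx
  · rw [Ideal.span_le]
    rintro _ ⟨x, hx, rfl⟩
    exact hsI x (hT ▸ Ideal.subset_span hx)
end

section
/- Let I, J, and A be ideals of R such that A ⊄ (J(R) : s) for every s ∈ S. If I and J are S-J-ideals of R, I is finitely generated, and A·I = A·J, then J is S-finite. -/
open Ideal

theorem stmt7 {R : Type*} [CommRing R] (S : Set R) (hS : MulClosed S)
    (I J A : Ideal R)
    (hA : ∀ s ∈ S, ¬ A ≤ ((⊥ : Ideal R).jacobson).colon (Ideal.span {s}))
    (hI : IsSJIdeal S I) (hJ : IsSJIdeal S J) (hfg : I.FG)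
    (hAIJ : A * I = A * J) : SFinite S J := by
  obtain ⟨_, sI, hsI, hI2⟩ := hI
  obtain ⟨_, sJ, hsJ, hJ2⟩ := hJ
  -- find a ∈ A with sI * a ∉ jacobson ⊥
  obtain ⟨a, haA, ha⟩ := SetLike.not_le_iff_exists.mp (hA sI hsI)
  simp only [Ideal.mem_colon_span_singleton] at ha
  obtain ⟨b, hbA, hb⟩ := SetLike.not_le_iff_exists.mp (hA sJ hsJ)
  simp only [Ideal.mem_colon_span_singleton] at hb
  -- sI • J ⊆ I
  have hJI : ∀ j ∈ J, sI * j ∈ I := by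
    intro j hj
    have h1 : a * j ∈ A * I := by
      rw [hAIJ]; exact Ideal.mul_mem_mul haA hj
    have h2 : a * j ∈ I := Ideal.mul_le_right h1
    rcases hI2 a j h2 with h | h
    · exact absurd h (by rwa [mul_comm] at ha)
    · exact h
  -- sJ • I ⊆ J
  have hIJ : ∀ i ∈ I, sJ * i ∈ J := by
    intro i hi
    have h1 : b * i ∈ A * J := by
      rw [← hAIJ]; exact Ideal.mul_mem_mul hbA hi
    have h2 : b * i ∈ J := Ideal.mul_le_right h1
    rcases hJ2 b i h2 with h | h
    · exact absurd h (by rwa [mul_comm] at hb)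
    · exact h
  refine ⟨sI * sJ, hS.2 sI hsI sJ hsJ, Ideal.span {sJ} * I, ?_, ?_, ?_⟩
  · exact Submodule.FG.mul ⟨{sJ}, by simp⟩ hfg
  · intro k hk
    have : sJ * (sI * k) ∈ Ideal.span {sJ} * I :=
      Ideal.mul_mem_mul (Ideal.mem_span_singleton_self sJ) (hJI k hk)
    have heq : sI * sJ * k = sJ * (sI * k) := by ring
    rwa [heq]
  · rw [Ideal.mul_le]
    intro r hr i hi
    obtain ⟨c, hc⟩ := Ideal.mem_span_singleton'.mp hr
    have : r * i = c * (sJ * i) := by rw [← hc]; ring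
    rw [this]
    exact Ideal.mul_mem_left _ _ (hIJ i hi)
end

section
/- Let I and A be ideals of R such that A ⊄ (J(R) : s) for every s ∈ S. If the ideal A·I is finitely generated and is an S-J-ideal of R, then I is S-finite. -/
open Ideal

theorem stmt8 {R : Type*} [CommRing R] (S : Set R) (hS : MulClosed S)
    (I A : Ideal R)
    (hA : ∀ s ∈ S, ¬ A ≤ ((⊥ : Ideal R).jacobson).colon (Ideal.span {s}))
    (hfg : (A * I).FG) (hAI : IsSJIdeal S (A * I)) : SFinite S I := by
  obtain ⟨_, s, hsS, hsj⟩ := hAI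
  obtain ⟨a, haA, haJ⟩ := Set.not_subset.mp (hA s hsS)
  refine ⟨s, hsS, A * I, hfg, ?_, Ideal.mul_le_right⟩
  intro k hk
  rcases hsj a k (Ideal.mul_mem_mul haA hk) with h | h
  · exact absurd ((Ideal.mem_colon_span_singleton).mpr (by rwa [mul_comm])) haJ
  · exact h
end

section
/- If I is an S-J-ideal of R that is maximal with respect to being an S-J-ideal (i.e., no S-J-ideal of R properly contains I), then I is a prime ideal of R. -/
open Ideal

theorem stmt10 {R : Type*} [CommRing R] (S : Set R) (hS : MulClosed S)
    (I : Ideal R) (hI : IsSJIdeal S I)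
    (hmax : ∀ K : Ideal R, IsSJIdeal S K → I ≤ K → K = I) :
    I.IsPrime := by
  obtain ⟨hdisj, s, hsS, hs⟩ := hI
  have hdisj' : ∀ x ∈ S, x ∉ I := by
    intro x hx hxI
    have : x ∈ S ∩ (I : Set R) := ⟨hx, hxI⟩
    rw [hdisj] at this
    exact this
  -- Lemma A : s * x ∈ I → x ∈ I, via maximality of I applied to (I : s)
  have hcolon : ∀ x : R, s * x ∈ I → x ∈ I := by
    intro x hx
    have hK : IsSJIdeal S (I.colon (Ideal.span {s})) := by
      constructor
      · rw [Set.eq_empty_iff_forall_notMem]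
        rintro t ⟨htS, htK⟩
        rw [SetLike.mem_coe, Ideal.mem_colon_span_singleton] at htK
        exact hdisj' _ (hS.2 t htS s hsS) htK
      · refine ⟨s, hsS, fun a b hab => ?_⟩
        rw [Ideal.mem_colon_span_singleton] at hab
        rcases hs a (b * s) (by rw [← mul_assoc]; exact hab) with h | h
        · exact Or.inl h
        · right
          rw [Ideal.mem_colon_span_singleton, mul_assoc]
          exact h
    have hle : I ≤ I.colon (Ideal.span {s}) := fun y hy => by
      rw [Ideal.mem_colon_span_singleton]; exact I.mul_mem_right s hy
    have hmem : x ∈ I.colon (Ideal.span {s}) := by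
      rw [Ideal.mem_colon_span_singleton, mul_comm]; exact hx
    rwa [hmax _ hK hle] at hmem
  constructor
  · intro htop
    exact hdisj' 1 hS.1 (htop ▸ Submodule.mem_top)
  · intro a b hab
    by_contra hcon
    push_neg at hcon
    obtain ⟨ha, hb⟩ := hcon
    by_cases hSJ : ∃ u ∈ S, u ∈ (⊥ : Ideal R).jacobson
    · -- some element of S is in the Jacobson radical: the pair condition is trivial,
      -- so I is maximal among ideals disjoint from S, hence prime.
      obtain ⟨u, huS, huJ⟩ := hSJ
      have meet : ∀ c : R, c ∉ I → ∃ t ∈ S, t ∈ I ⊔ Ideal.span {c} := by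
        intro c hc
        by_contra hno
        push_neg at hno
        have hKSJ : IsSJIdeal S (I ⊔ Ideal.span {c}) := by
          constructor
          · rw [Set.eq_empty_iff_forall_notMem]
            rintro t ⟨htS, htK⟩
            exact hno t htS htK
          · refine ⟨s * u, hS.2 s hsS u huS, fun x y _ => Or.inl ?_⟩
            exact Ideal.mul_mem_right _ _ (Ideal.mul_mem_left _ s huJ)
        have heq := hmax _ hKSJ le_sup_left
        exact hc (heq ▸ (Submodule.mem_sup_right (Ideal.mem_span_singleton_self c)))
      obtain ⟨t₁, ht₁S, ht₁⟩ := meet a ha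
      obtain ⟨t₂, ht₂S, ht₂⟩ := meet b hb
      rw [Submodule.mem_sup] at ht₁ ht₂
      obtain ⟨i₁, hi₁, z₁, hz₁, ht₁e⟩ := ht₁
      obtain ⟨i₂, hi₂, z₂, hz₂, ht₂e⟩ := ht₂
      rw [Ideal.mem_span_singleton] at hz₁ hz₂
      obtain ⟨r₁, hr₁⟩ := hz₁
      obtain ⟨r₂, hr₂⟩ := hz₂
      have hmemI : t₁ * t₂ ∈ I := by
        have : t₁ * t₂ = i₁ * t₂ + i₂ * (a * r₁) + (r₁ * r₂) * (a * b) := by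
          rw [← ht₁e, ← ht₂e, hr₁, hr₂]; ring
        rw [this]
        exact I.add_mem (I.add_mem (I.mul_mem_right _ hi₁) (I.mul_mem_right _ hi₂))
          (I.mul_mem_left _ hab)
      exact hdisj' _ (hS.2 t₁ ht₁S t₂ ht₂S) hmemI
    · -- S ∩ J(R) = ∅ : then (I : a) is an S-J-ideal, so (I : a) = I, but b ∈ (I : a).
      push_neg at hSJ
      have hK : IsSJIdeal S (I.colon (Ideal.span {a})) := by
        constructor
        · rw [Set.eq_empty_iff_forall_notMem]
          rintro t ⟨htS, htK⟩
          rw [SetLike.mem_coe, Ideal.mem_colon_span_singleton] at htK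
          rcases hs t a htK with h | h
          · exact hSJ (s * t) (hS.2 s hsS t htS) h
          · exact ha (hcolon a h)
        · refine ⟨s, hsS, fun x y hxy => ?_⟩
          rw [Ideal.mem_colon_span_singleton] at hxy
          rcases hs x (y * a) (by rw [← mul_assoc]; exact hxy) with h | h
          · exact Or.inl h
          · right
            rw [Ideal.mem_colon_span_singleton, mul_assoc]
            exact h
      have hle : I ≤ I.colon (Ideal.span {a}) := fun y hy => by
        rw [Ideal.mem_colon_span_singleton]; exact I.mul_mem_right a hy
      have hmem : b ∈ I.colon (Ideal.span {a}) := by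
        rw [Ideal.mem_colon_span_singleton, mul_comm]; exact hab
      exact hb (by rwa [hmax _ hK hle] at hmem)
end

section
/- Let I be a prime ideal of R with I ∩ S = ∅ such that I = (J(R) : s) for some s ∈ S. Then I is an S-J-ideal of R, and every S-J-ideal of R is contained in I; in particular, I is maximal with respect to being an S-J-ideal. -/
open Ideal

theorem stmt11 {R : Type*} [CommRing R] (S : Set R) (hS : MulClosed S)
    (I : Ideal R) (hprime : I.IsPrime) (hdisj : S ∩ (I : Set R) = ∅)
    (s : R) (hs : s ∈ S)
    (hIs : I = ((⊥ : Ideal R).jacobson).colon (Ideal.span {s})) :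
    IsSJIdeal S I ∧ ∀ K : Ideal R, IsSJIdeal S K → K ≤ I := by
  constructor
  · refine ⟨hdisj, s, hs, fun a b hab => ?_⟩
    rcases hprime.mem_or_mem hab with h | h
    · left
      rw [hIs, Ideal.mem_colon_span_singleton] at h
      rwa [mul_comm] at h
    · exact Or.inr (I.mul_mem_left s h)
  · rintro K ⟨hKdisj, t, htS, hK⟩ k hk
    have htk := hK k 1 (by simpa using hk)
    have htK : t ∉ K := fun h => Set.eq_empty_iff_forall_notMem.mp hKdisj t ⟨htS, h⟩
    have h1 : t * k ∈ (⊥ : Ideal R).jacobson := htk.resolve_right (by simpa using htK)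
    have hJI : (⊥ : Ideal R).jacobson ≤ I := by
      intro x hx
      rw [hIs, Ideal.mem_colon_span_singleton]
      exact Ideal.mul_mem_right s _ hx
    rcases hprime.mem_or_mem (hJI h1) with h | h
    · exact absurd h fun hh => Set.eq_empty_iff_forall_notMem.mp hdisj t ⟨htS, hh⟩
    · exact h
end

section
/- Let I be an ideal of R with I ∩ S = ∅, and let s ∈ S satisfy (J(R) : s) = J(R). Then I is an S-J-ideal associated with s if and only if both of the following hold: (i) for all a, b ∈ R with ab ∈ I, either a·s ∈ J*(I) or b·s ∈ I, where J*(I) is the intersection of all maximal ideals of R containing I; and (ii) I ⊆ (J(R) : s). -/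
open Ideal

theorem stmt12 {R : Type*} [CommRing R] (S : Set R) (hS : MulClosed S)
    (I : Ideal R) (hdisj : S ∩ (I : Set R) = ∅)
    (s : R) (hs : s ∈ S)
    (hJs : ((⊥ : Ideal R).jacobson).colon (Ideal.span {s}) = (⊥ : Ideal R).jacobson) :
    SJIdealWith S I s ↔
      ((∀ a b : R, a * b ∈ I → a * s ∈ I.jacobson ∨ b * s ∈ I) ∧
        I ≤ ((⊥ : Ideal R).jacobson).colon (Ideal.span {s})) := by
  have hsnotI : s ∉ I := fun h => by
    have : s ∈ S ∩ (I : Set R) := ⟨hs, h⟩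
    simp [hdisj] at this
  constructor
  · rintro ⟨-, h⟩
    constructor
    · intro a b hab
      rcases h a b hab with h1 | h2
      · left
        rw [mul_comm]
        exact Ideal.jacobson_mono bot_le h1
      · right; rwa [mul_comm]
    · intro x hx
      rw [Ideal.mem_colon_span_singleton]
      rcases h x 1 (by simpa using hx) with h1 | h2
      · rwa [mul_comm] at h1
      · exact absurd (by simpa using h2) hsnotI
  · rintro ⟨h1, h2⟩
    rw [hJs] at h2
    refine ⟨hs, fun a b hab => ?_⟩
    rcases h1 a b hab with ha | hb
    · left
      rw [mul_comm]
      have : I.jacobson ≤ ((⊥ : Ideal R).jacobson).jacobson := Ideal.jacobson_mono h2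
      rw [Ideal.jacobson_idem] at this
      exact this ha
    · right; rwa [mul_comm]
end

section
/- Let ψ : R₁ → R₂ be a surjective ring homomorphism of commutative rings with identity and S a multiplicatively closed subset of R₁. If P is an S-J-ideal of R₁ with ker(ψ) ⊆ P, then the image ideal ψ(P) is a ψ(S)-J-ideal of R₂, where ψ(S) is the multiplicatively closed subset {ψ(s) : s ∈ S} of R₂. -/
open Ideal

theorem stmt13 {R₁ R₂ : Type*} [CommRing R₁] [CommRing R₂] (ψ : R₁ →+* R₂)
    (hsurj : Function.Surjective ψ) (S : Set R₁) (hS : MulClosed S)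
    (P : Ideal R₁) (hker : RingHom.ker ψ ≤ P) (hP : IsSJIdeal S P) :
    IsSJIdeal (ψ '' S) (P.map ψ) := by
  obtain ⟨hdisj, s, hsS, hs⟩ := hP
  have hcomap : Ideal.comap ψ (P.map ψ) = P := by
    rw [Ideal.comap_map_of_surjective ψ hsurj P]
    exact sup_eq_left.mpr hker
  have hmemP : ∀ x : R₁, ψ x ∈ P.map ψ → x ∈ P := by
    intro x hx
    have : x ∈ Ideal.comap ψ (P.map ψ) := hx
    rwa [hcomap] at this
  have hjac : ∀ x : R₁, x ∈ (⊥ : Ideal R₁).jacobson → ψ x ∈ (⊥ : Ideal R₂).jacobson := by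
    intro x hx
    rw [Ideal.mem_jacobson_bot] at hx ⊢
    intro y
    obtain ⟨y₀, rfl⟩ := hsurj y
    have := (hx y₀).map ψ
    simpa using this
  constructor
  · ext y
    simp only [Set.mem_inter_iff, Set.mem_image, Set.mem_empty_iff_false, iff_false, not_and]
    rintro ⟨x, hxS, rfl⟩ hxP
    have hxPmem : x ∈ P := hmemP x hxP
    have : x ∈ S ∩ (P : Set R₁) := ⟨hxS, hxPmem⟩
    rw [hdisj] at this
    exact this
  · refine ⟨ψ s, ⟨s, hsS, rfl⟩, ?_⟩
    intro a b hab
    obtain ⟨a₀, rfl⟩ := hsurj a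
    obtain ⟨b₀, rfl⟩ := hsurj b
    have : a₀ * b₀ ∈ P := hmemP _ (by rw [RingHom.map_mul]; exact hab)
    rcases hs a₀ b₀ this with h | h
    · left
      have := hjac _ h
      rwa [RingHom.map_mul] at this
    · right
      have : ψ (s * b₀) ∈ P.map ψ := Ideal.mem_map_of_mem ψ h
      rwa [RingHom.map_mul] at this
end

section
/- Let ψ : R₁ → R₂ be a surjective ring homomorphism of commutative rings with identity and S a multiplicatively closed subset of R₁. If L is a ψ(S)-J-ideal of R₂ (where ψ(S) = {ψ(s) : s ∈ S}) and ker(ψ) ⊆ J(R₁), then the preimage ψ⁻¹(L) is an S-J-ideal of R₁. -/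
open Ideal

theorem stmt14 {R₁ R₂ : Type*} [CommRing R₁] [CommRing R₂] (ψ : R₁ →+* R₂)
    (hsurj : Function.Surjective ψ) (S : Set R₁) (hS : MulClosed S)
    (L : Ideal R₂) (hker : RingHom.ker ψ ≤ (⊥ : Ideal R₁).jacobson)
    (hL : IsSJIdeal (ψ '' S) L) : IsSJIdeal S (L.comap ψ) := by
  obtain ⟨hdisj, s₂, hs₂S, hs₂⟩ := hL
  constructor
  · ext x
    simp only [Set.mem_inter_iff, Set.mem_empty_iff_false, iff_false, not_and]
    intro hxS hxL
    have : ψ x ∈ (ψ '' S) ∩ (L : Set R₂) := ⟨⟨x, hxS, rfl⟩, hxL⟩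
    rw [hdisj] at this
    exact this
  · obtain ⟨s, hsS, rfl⟩ := hs₂S
    refine ⟨s, hsS, fun a b hab => ?_⟩
    rcases hs₂ (ψ a) (ψ b) (by rwa [← _root_.map_mul]) with h | h
    · left
      have hmem : s * a ∈ Ideal.comap ψ ((⊥ : Ideal R₂).jacobson) := by
        simpa [Ideal.mem_comap, _root_.map_mul] using h
      rw [Ideal.comap_jacobson_of_surjective hsurj, ← RingHom.ker_eq_comap_bot ψ] at hmem
      have : (RingHom.ker ψ).jacobson ≤ (⊥ : Ideal R₁).jacobson := by
        calc (RingHom.ker ψ).jacobson ≤ ((⊥ : Ideal R₁).jacobson).jacobson :=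
              Ideal.jacobson_mono hker
          _ = (⊥ : Ideal R₁).jacobson := Ideal.jacobson_idem
      exact this hmem
    · right
      simpa [Ideal.mem_comap, _root_.map_mul] using h
end

section
/- Let P₁ ⊆ P₂ be ideals of R. If P₂ is an S-J-ideal of R, then the image P₂/P₁ of P₂ in the quotient ring R/P₁ is an S̄-J-ideal of R/P₁, where S̄ = {s + P₁ : s ∈ S}. -/
open Ideal

theorem stmt15 {R : Type*} [CommRing R] (S : Set R) (hS : MulClosed S)
    (P₁ P₂ : Ideal R) (h12 : P₁ ≤ P₂) (hP₂ : IsSJIdeal S P₂) :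
    IsSJIdeal ((Ideal.Quotient.mk P₁) '' S) (P₂.map (Ideal.Quotient.mk P₁)) := by
  obtain ⟨hdisj, s, hsS, hmain⟩ := hP₂
  have hsur : Function.Surjective (Ideal.Quotient.mk P₁) := Ideal.Quotient.mk_surjective
  have hmemmap : ∀ x : R, (Ideal.Quotient.mk P₁) x ∈ P₂.map (Ideal.Quotient.mk P₁) ↔ x ∈ P₂ := by
    intro x
    rw [Ideal.mem_map_iff_of_surjective _ hsur]
    constructor
    · rintro ⟨p, hp, hpx⟩
      have : x - p ∈ P₁ := by
        rwa [← Ideal.Quotient.mk_eq_mk_iff_sub_mem, eq_comm]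
      have := h12 this
      have : x - p + p ∈ P₂ := P₂.add_mem this hp
      simpa using this
    · intro hx; exact ⟨x, hx, rfl⟩
  have hjac : ∀ x : R, x ∈ (⊥ : Ideal R).jacobson →
      (Ideal.Quotient.mk P₁) x ∈ (⊥ : Ideal (R ⧸ P₁)).jacobson := by
    intro x hx
    have h1 : P₁.jacobson.map (Ideal.Quotient.mk P₁) = (P₁.map (Ideal.Quotient.mk P₁)).jacobson :=
      Ideal.map_jacobson_of_surjective hsur (le_of_eq Ideal.mk_ker)
    rw [Ideal.map_quotient_self] at h1
    rw [← h1]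
    exact Ideal.mem_map_of_mem _ (Ideal.jacobson_mono bot_le hx)
  constructor
  · ext x
    simp only [Set.mem_inter_iff, Set.mem_empty_iff_false, iff_false, not_and]
    rintro ⟨t, htS, rfl⟩ hmem
    rw [SetLike.mem_coe, hmemmap] at hmem
    have : t ∈ S ∩ (P₂ : Set R) := ⟨htS, hmem⟩
    rw [hdisj] at this
    exact this
  · refine ⟨(Ideal.Quotient.mk P₁) s, ⟨s, hsS, rfl⟩, ?_⟩
    intro a b hab
    obtain ⟨a, rfl⟩ := hsur a
    obtain ⟨b, rfl⟩ := hsur b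
    rw [← _root_.map_mul, hmemmap] at hab
    rcases hmain a b hab with h | h
    · left; rw [← _root_.map_mul]; exact hjac _ h
    · right; rw [← _root_.map_mul, hmemmap]; exact h
end

section
/- Let P₁ ⊆ P₂ be ideals of R with P₁ ⊆ J(R). If the image P₂/P₁ of P₂ in the quotient ring R/P₁ is an S̄-J-ideal of R/P₁, where S̄ = {s + P₁ : s ∈ S}, then P₂ is an S-J-ideal of R. -/
open Ideal

theorem stmt16 {R : Type*} [CommRing R] (S : Set R) (hS : MulClosed S)
    (P₁ P₂ : Ideal R) (h12 : P₁ ≤ P₂) (hP₁J : P₁ ≤ (⊥ : Ideal R).jacobson)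
    (hquot : IsSJIdeal ((Ideal.Quotient.mk P₁) '' S) (P₂.map (Ideal.Quotient.mk P₁))) :
    IsSJIdeal S P₂ := by
  obtain ⟨hdisj, s', hs'S, hs'⟩ := hquot
  obtain ⟨s, hsS, rfl⟩ := hs'S
  have hsurj := Ideal.Quotient.mk_surjective (I := P₁)
  have hcomap : Ideal.comap (Ideal.Quotient.mk P₁) (P₂.map (Ideal.Quotient.mk P₁)) = P₂ := by
    rw [Ideal.comap_map_of_surjective _ hsurj, ← RingHom.ker_eq_comap_bot,
      Ideal.mk_ker, sup_eq_left.mpr h12]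
  constructor
  · ext x
    simp only [Set.mem_inter_iff, Set.mem_empty_iff_false, iff_false, not_and, SetLike.mem_coe]
    intro hxS hxP
    have : Ideal.Quotient.mk P₁ x ∈ ((Ideal.Quotient.mk P₁) '' S) ∩ (P₂.map (Ideal.Quotient.mk P₁) : Set _) :=
      ⟨⟨x, hxS, rfl⟩, Ideal.mem_map_of_mem _ hxP⟩
    rw [hdisj] at this
    exact this
  · refine ⟨s, hsS, fun a b hab => ?_⟩
    have hab' : Ideal.Quotient.mk P₁ a * Ideal.Quotient.mk P₁ b ∈ P₂.map (Ideal.Quotient.mk P₁) := by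
      rw [← _root_.map_mul]; exact Ideal.mem_map_of_mem _ hab
    rcases hs' _ _ hab' with h | h
    · left
      have : s * a ∈ Ideal.comap (Ideal.Quotient.mk P₁) ((⊥ : Ideal (R ⧸ P₁)).jacobson) := by
        simpa [_root_.map_mul] using h
      rw [Ideal.comap_jacobson_of_surjective hsurj, ← RingHom.ker_eq_comap_bot,
        Ideal.mk_ker] at this
      have h2 : s * a ∈ ((⊥ : Ideal R).jacobson).jacobson := Ideal.jacobson_mono hP₁J this
      rwa [Ideal.jacobson_idem] at h2
    · right
      have : s * b ∈ Ideal.comap (Ideal.Quotient.mk P₁) (P₂.map (Ideal.Quotient.mk P₁)) := by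
        rw [Ideal.mem_comap, _root_.map_mul]; exact h
      rwa [hcomap] at this
end

section
/- Let R₁ and R₂ be commutative rings with identity, S₁ ⊆ R₁ and S₂ ⊆ R₂ multiplicatively closed subsets, and I₁ an ideal of R₁. Then the ideal I₁ × R₂ of the product ring R₁ × R₂ is an (S₁ × S₂)-J-ideal of R₁ × R₂ if and only if I₁ is an S₁-J-ideal of R₁ and J(R₂) ∩ S₂ ≠ ∅. -/
open Ideal

lemma prod_isUnit_iff {M N : Type*} [CommMonoid M] [CommMonoid N] {x : M} {y : N} :
    IsUnit (x, y) ↔ IsUnit x ∧ IsUnit y := by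
  simp only [isUnit_iff_exists_inv]
  constructor
  · rintro ⟨⟨u, v⟩, huv⟩
    rw [Prod.mk_mul_mk, Prod.mk_eq_one] at huv
    exact ⟨⟨u, huv.1⟩, ⟨v, huv.2⟩⟩
  · rintro ⟨⟨u, hu⟩, ⟨v, hv⟩⟩
    exact ⟨(u, v), by rw [Prod.mk_mul_mk, hu, hv]; rfl⟩

lemma mem_jacobson_prod {R₁ R₂ : Type*} [CommRing R₁] [CommRing R₂] (x : R₁) (y : R₂) :
    (x, y) ∈ (⊥ : Ideal (R₁ × R₂)).jacobson ↔
      x ∈ (⊥ : Ideal R₁).jacobson ∧ y ∈ (⊥ : Ideal R₂).jacobson := by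
  simp only [Ideal.mem_jacobson_bot]
  constructor
  · intro h
    constructor
    · intro u
      have := h (u, 0)
      rw [prod_isUnit_iff] at this
      simpa using this.1
    · intro v
      have := h (0, v)
      rw [prod_isUnit_iff] at this
      simpa using this.2
  · rintro ⟨h1, h2⟩ ⟨u, v⟩
    rw [show (x, y) * (u, v) + 1 = (x * u + 1, y * v + 1) from rfl, prod_isUnit_iff]
    exact ⟨h1 u, h2 v⟩

theorem stmt17 {R₁ R₂ : Type*} [CommRing R₁] [CommRing R₂]
    (S₁ : Set R₁) (S₂ : Set R₂) (hS₁ : MulClosed S₁) (hS₂ : MulClosed S₂)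
    (I₁ : Ideal R₁) :
    IsSJIdeal (S₁ ×ˢ S₂) (I₁.prod (⊤ : Ideal R₂)) ↔
      (IsSJIdeal S₁ I₁ ∧ (((⊥ : Ideal R₂).jacobson : Set R₂) ∩ S₂).Nonempty) := by
  constructor
  · rintro ⟨hdisj, ⟨s₁, s₂⟩, hsS, hs⟩
    rw [Set.mem_prod] at hsS
    have hdisj' : S₁ ∩ (I₁ : Set R₁) = ∅ := by
      rw [Set.eq_empty_iff_forall_notMem] at hdisj ⊢
      intro x ⟨hxS, hxI⟩
      exact hdisj (x, 1) ⟨Set.mem_prod.mpr ⟨hxS, hS₂.1⟩, (Ideal.mem_prod _ _).mpr ⟨hxI, trivial⟩⟩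
    have hsnI : s₁ ∉ I₁ := by
      intro h
      rw [Set.eq_empty_iff_forall_notMem] at hdisj'
      exact hdisj' s₁ ⟨hsS.1, h⟩
    refine ⟨⟨hdisj', s₁, hsS.1, ?_⟩, s₂, ?_, hsS.2⟩
    · intro a b hab
      have := hs (a, 1) (b, 1) ((Ideal.mem_prod _ _).mpr ⟨hab, trivial⟩)
      rcases this with h | h
      · exact Or.inl ((mem_jacobson_prod _ _).mp h).1
      · exact Or.inr ((Ideal.mem_prod _ _).mp h).1
    · have := hs (0, 1) (1, 0) (by simp [Ideal.mem_prod])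
      rcases this with h | h
      · have := ((mem_jacobson_prod _ _).mp (by simpa using h)).2
        simpa using this
      · exact absurd (((Ideal.mem_prod _ _).mp h).1) (by simpa using hsnI)
  · rintro ⟨⟨hdisj, s₁, hs₁S, hs₁⟩, t, htJ, htS⟩
    constructor
    · rw [Set.eq_empty_iff_forall_notMem] at hdisj ⊢
      rintro ⟨x, y⟩ ⟨hmem, hI⟩
      rw [Set.mem_prod] at hmem
      exact hdisj x ⟨hmem.1, ((Ideal.mem_prod _ _).mp hI).1⟩
    · refine ⟨(s₁, t), Set.mem_prod.mpr ⟨hs₁S, htS⟩, ?_⟩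
      rintro ⟨a₁, a₂⟩ ⟨b₁, b₂⟩ hab
      have h1 : a₁ * b₁ ∈ I₁ := ((Ideal.mem_prod _ _).mp hab).1
      rcases hs₁ a₁ b₁ h1 with h | h
      · left
        exact (mem_jacobson_prod _ _).mpr ⟨h, Ideal.mul_mem_right _ _ htJ⟩
      · right
        exact (Ideal.mem_prod _ _).mpr ⟨h, trivial⟩
end

section
/- Let M be an R-module and let R ⊞ M denote the idealization (trivial square-zero extension) of M over R, the ring with underlying set R × M, componentwise addition, and multiplication (a₁, m₁)(a₂, m₂) = (a₁a₂, a₁m₂ + a₂m₁). Let S_M = S ⊞ M = {(s, m) : s ∈ S, m ∈ M}, a multiplicatively closed subset of R ⊞ M, and let I be an ideal of R with I ∩ S = ∅. Then I ⊞ M = {(a, m) : a ∈ I, m ∈ M} is an S_M-J-ideal of R ⊞ M if and only if I is an S-J-ideal of R. -/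
open Ideal

lemma mem_jacobson_tsze {R M : Type*} [CommRing R] [AddCommGroup M] [Module R M]
    [Module Rᵐᵒᵖ M] [IsCentralScalar R M] (x : TrivSqZeroExt R M) :
    x ∈ (⊥ : Ideal (TrivSqZeroExt R M)).jacobson ↔ x.fst ∈ (⊥ : Ideal R).jacobson := by
  rw [Ideal.mem_jacobson_bot, Ideal.mem_jacobson_bot]
  constructor
  · intro h y
    have := h (TrivSqZeroExt.inl y)
    rwa [TrivSqZeroExt.isUnit_iff_isUnit_fst, TrivSqZeroExt.fst_add, TrivSqZeroExt.fst_mul,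
      TrivSqZeroExt.fst_inl, TrivSqZeroExt.fst_one] at this
  · intro h y
    rw [TrivSqZeroExt.isUnit_iff_isUnit_fst, TrivSqZeroExt.fst_add, TrivSqZeroExt.fst_mul,
      TrivSqZeroExt.fst_one]
    exact h y.fst

theorem stmt19 {R M : Type*} [CommRing R] [AddCommGroup M] [Module R M]
    [Module Rᵐᵒᵖ M] [IsCentralScalar R M]
    (S : Set R) (hS : MulClosed S) (I : Ideal R) (hdisj : S ∩ (I : Set R) = ∅) :
    IsSJIdeal {p : TrivSqZeroExt R M | p.fst ∈ S}
        (Ideal.comap ((TrivSqZeroExt.fstHom R R M).toRingHom) I) ↔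
      IsSJIdeal S I := by
  have hmem : ∀ x : TrivSqZeroExt R M,
      x ∈ Ideal.comap ((TrivSqZeroExt.fstHom R R M).toRingHom) I ↔ x.fst ∈ I := by
    intro x; rfl
  have hdisj' : {p : TrivSqZeroExt R M | p.fst ∈ S} ∩
      ((Ideal.comap ((TrivSqZeroExt.fstHom R R M).toRingHom) I : Ideal (TrivSqZeroExt R M)) :
        Set (TrivSqZeroExt R M)) = ∅ := by
    rw [Set.eq_empty_iff_forall_notMem]
    rintro x ⟨hx1, hx2⟩
    rw [Set.eq_empty_iff_forall_notMem] at hdisj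
    exact hdisj x.fst ⟨hx1, (hmem x).mp hx2⟩
  constructor
  · rintro ⟨-, s, hsS, hs⟩
    refine ⟨hdisj, s.fst, hsS, fun a b hab => ?_⟩
    have := hs (TrivSqZeroExt.inl a) (TrivSqZeroExt.inl b) (by
      rw [hmem, TrivSqZeroExt.fst_mul, TrivSqZeroExt.fst_inl, TrivSqZeroExt.fst_inl]
      exact hab)
    rcases this with h | h
    · left
      rw [mem_jacobson_tsze] at h
      rwa [TrivSqZeroExt.fst_mul, TrivSqZeroExt.fst_inl] at h
    · right
      rw [hmem, TrivSqZeroExt.fst_mul, TrivSqZeroExt.fst_inl] at h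
      exact h
  · rintro ⟨-, s, hsS, hs⟩
    refine ⟨hdisj', TrivSqZeroExt.inl s, by simpa using hsS, fun a b hab => ?_⟩
    rw [hmem, TrivSqZeroExt.fst_mul] at hab
    rcases hs a.fst b.fst hab with h | h
    · left
      rw [mem_jacobson_tsze, TrivSqZeroExt.fst_mul, TrivSqZeroExt.fst_inl]
      exact h
    · right
      rw [hmem, TrivSqZeroExt.fst_mul, TrivSqZeroExt.fst_inl]
      exact h
end
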